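/- Let (R,U,X) be an error-free perfect secrecy system with H(X) = log|𝒰|. Then X is a deterministic function of (U,R) (i.e., H(X|U,R)=0) and I(R;U,X) = log|𝒰|. -/

import Mathlib

open Finset

/-- Shannon entropy of a finitely supported probability mass function. -/
noncomputable def ent {α : Type*} [Fintype α] (q : α → ℝ) : ℝ :=
  ∑ a, Real.negMulLog (q a)

lemma ent_prod {α β : Type*} [Fintype α] [Fintype β] (f : α → ℝ) (h : β → ℝ)
    (hf1 : ∑ a, f a = 1) (hh1 : ∑ b, h b = 1) :
    ent (fun t : α × β => f t.1 * h t.2) = ent f + ent h := by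
  have key : ∀ a, ∑ b, (h b * Real.negMulLog (f a) + f a * Real.negMulLog (h b))
      = Real.negMulLog (f a) + f a * ∑ b, Real.negMulLog (h b) := by
    intro a
    rw [Finset.sum_add_distrib, ← Finset.sum_mul, ← Finset.mul_sum, hh1, one_mul]
  simp only [ent, Fintype.sum_prod_type, Real.negMulLog_mul, key]
  rw [Finset.sum_add_distrib, ← Finset.sum_mul, hf1, one_mul]

open scoped Classical in
/-- If an error-free perfect secrecy system has `H(X) = log|𝒰|` (minimal
number of channel uses), then `X` is a deterministic function of `(U,R)`
(`H(X|U,R) = 0`) and `I(R;U,X) = log|𝒰|`. -/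
theorem stmt_18 {𝒰 ℛ 𝒳 : Type*} [Fintype 𝒰] [Fintype ℛ] [Fintype 𝒳]
    (p : 𝒰 → ℛ → 𝒳 → ℝ)
    (hnn : ∀ u r x, 0 ≤ p u r x)
    (hsum : ∑ u, ∑ r, ∑ x, p u r x = 1)
    (hIUX : ∀ u x, (∑ r, p u r x)
      = (∑ r, ∑ x', p u r x') * (∑ u', ∑ r, p u' r x))
    (hIUR : ∀ u r, (∑ x, p u r x)
      = (∑ r', ∑ x, p u r' x) * (∑ u', ∑ x, p u' r x))
    (hdet : ∃ g : ℛ → 𝒳 → 𝒰, ∀ u r x, p u r x ≠ 0 → u = g r x)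
    -- `H(X) = log |𝒰|`
    (hHX : ent (fun x : 𝒳 => ∑ u, ∑ r, p u r x)
      = Real.log ((univ.filter fun u => (∑ r, ∑ x, p u r x) ≠ 0).card)) :
    -- `H(X|U,R) = 0` : `X` is a deterministic function of `(U,R)`
    (ent (fun t : 𝒰 × ℛ × 𝒳 => p t.1 t.2.1 t.2.2)
        - ent (fun t : 𝒰 × ℛ => ∑ x, p t.1 t.2 x) = 0)
    -- `I(R;U,X) = log |𝒰|`
    ∧ (ent (fun r : ℛ => ∑ u, ∑ x, p u r x)
        + ent (fun t : 𝒰 × 𝒳 => ∑ r, p t.1 r t.2)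
        - ent (fun t : 𝒰 × ℛ × 𝒳 => p t.1 t.2.1 t.2.2)
      = Real.log ((univ.filter fun u => (∑ r, ∑ x, p u r x) ≠ 0).card)) := by
  classical
  obtain ⟨g, hg⟩ := hdet
  -- nonnegativity of marginals
  have hnnU : ∀ u, (0:ℝ) ≤ ∑ r, ∑ x, p u r x := fun u =>
    Finset.sum_nonneg fun r _ => Finset.sum_nonneg fun x _ => hnn u r x
  have hnnR : ∀ r, (0:ℝ) ≤ ∑ u, ∑ x, p u r x := fun r =>
    Finset.sum_nonneg fun u _ => Finset.sum_nonneg fun x _ => hnn u r x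
  have hnnX : ∀ x, (0:ℝ) ≤ ∑ u, ∑ r, p u r x := fun x =>
    Finset.sum_nonneg fun u _ => Finset.sum_nonneg fun r _ => hnn u r x
  -- total masses
  have hR1 : ∑ r, ∑ u, ∑ x, p u r x = 1 := by
    rw [Finset.sum_comm]; exact hsum
  have hX1 : ∑ x, ∑ u, ∑ r, p u r x = 1 := by
    rw [← hsum, Finset.sum_comm]
    exact Finset.sum_congr rfl fun u _ => Finset.sum_comm
  -- pointwise bounds by marginals
  have hle_pU : ∀ u r x, p u r x ≤ ∑ r', ∑ x', p u r' x' := by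
    intro u r x
    calc p u r x ≤ ∑ x', p u r x' :=
          Finset.single_le_sum (fun x' _ => hnn u r x') (mem_univ x)
      _ ≤ ∑ r', ∑ x', p u r' x' :=
          Finset.single_le_sum
            (fun r' _ => Finset.sum_nonneg fun x' _ => hnn u r' x') (mem_univ r)
  have hle_pX : ∀ u r x, p u r x ≤ ∑ u', ∑ r', p u' r' x := by
    intro u r x
    calc p u r x ≤ ∑ r', p u r' x :=
          Finset.single_le_sum (fun r' _ => hnn u r' x) (mem_univ r)
      _ ≤ ∑ u', ∑ r', p u' r' x :=
          Finset.single_le_sum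
            (fun u' _ => Finset.sum_nonneg fun r' _ => hnn u' r' x) (mem_univ u)
  -- the support of U
  set sU : Finset 𝒰 := univ.filter (fun u => (∑ r, ∑ x, p u r x) ≠ 0) with hsU
  have hNpos : 0 < sU.card := by
    rw [Finset.card_pos]
    obtain ⟨u, hu⟩ : ∃ u, (∑ r, ∑ x, p u r x) ≠ 0 := by
      by_contra hall
      push_neg at hall
      rw [Finset.sum_eq_zero (fun u _ => hall u)] at hsum
      exact one_ne_zero hsum.symm
    exact ⟨u, by rw [hsU]; exact Finset.mem_filter.mpr ⟨mem_univ u, hu⟩⟩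
  have hNne : (sU.card : ℝ) ≠ 0 := Nat.cast_ne_zero.mpr hNpos.ne'
  -- key termwise bound : p u r x ≤ [u = g r x] * pU u * pR r
  have hterm : ∀ u r x, p u r x ≤
      if u = g r x then (∑ r', ∑ x', p u r' x') * (∑ u', ∑ x', p u' r x') else 0 := by
    intro u r x
    by_cases hc : u = g r x
    · rw [if_pos hc, ← hIUR u r]
      exact Finset.single_le_sum (fun x' _ => hnn u r x') (mem_univ x)
    · rw [if_neg hc]
      rcases eq_or_lt_of_le (hnn u r x) with h | h
      · exact le_of_eq h.symm
      · exact absurd (hg u r x h.ne') hc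
  -- pX x ≤ S u for u in the support, where S u = ∑_r [u = g r x] pR r
  have hS_le : ∀ x u, (∑ r, ∑ x', p u r x') ≠ 0 →
      (∑ u', ∑ r, p u' r x) ≤ ∑ r, (if u = g r x then (∑ u', ∑ x', p u' r x') else 0) := by
    intro x u hu
    have hpos : 0 < ∑ r, ∑ x', p u r x' := (hnnU u).lt_of_ne (Ne.symm hu)
    have h1 : (∑ r, ∑ x', p u r x') * (∑ u', ∑ r, p u' r x)
        ≤ (∑ r, ∑ x', p u r x') *
            ∑ r, (if u = g r x then (∑ u', ∑ x', p u' r x') else 0) := by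
      rw [← hIUX u x, Finset.mul_sum]
      apply Finset.sum_le_sum
      intro r _
      have h2 := hterm u r x
      by_cases hc : u = g r x
      · rw [if_pos hc] at h2 ⊢
        exact h2
      · rw [if_neg hc] at h2 ⊢
        rw [mul_zero]
        exact h2
    exact le_of_mul_le_mul_left h1 hpos
  -- the S u, for u ranging over the support, sum to at most 1
  have hSsum : ∀ x,
      (∑ u ∈ sU, ∑ r, (if u = g r x then (∑ u', ∑ x', p u' r x') else 0)) ≤ 1 := by
    intro x
    rw [Finset.sum_comm]
    calc ∑ r, ∑ u ∈ sU, (if u = g r x then (∑ u', ∑ x', p u' r x') else 0)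
        ≤ ∑ r, ∑ u', ∑ x', p u' r x' := by
          apply Finset.sum_le_sum
          intro r _
          calc ∑ u ∈ sU, (if u = g r x then (∑ u', ∑ x', p u' r x') else 0)
              ≤ ∑ u, (if u = g r x then (∑ u', ∑ x', p u' r x') else 0) := by
                apply Finset.sum_le_sum_of_subset_of_nonneg (Finset.filter_subset _ _)
                intro u _ _
                by_cases hc : u = g r x
                · rw [if_pos hc]; exact hnnR r
                · rw [if_neg hc]
            _ = ∑ u', ∑ x', p u' r x' := by
                simp
      _ = 1 := hR1
  -- key bound : N * pX x ≤ 1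
  have hkey : ∀ x, (sU.card : ℝ) * (∑ u, ∑ r, p u r x) ≤ 1 := by
    intro x
    calc (sU.card : ℝ) * (∑ u, ∑ r, p u r x)
        = ∑ _u ∈ sU, (∑ u', ∑ r, p u' r x) := by
          rw [Finset.sum_const, nsmul_eq_mul]
      _ ≤ ∑ u ∈ sU, ∑ r, (if u = g r x then (∑ u', ∑ x', p u' r x') else 0) := by
          apply Finset.sum_le_sum
          intro u hu
          exact hS_le x u (by rw [hsU] at hu; exact (Finset.mem_filter.mp hu).2)
      _ ≤ 1 := hSsum x
  -- equality analysis using hHX : every x in the support has pX x = 1/N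
  have hunif : ∀ x, (∑ u, ∑ r, p u r x) ≠ 0 →
      (∑ u, ∑ r, p u r x) = 1 / (sU.card : ℝ) := by
    have hFnn : ∀ x, 0 ≤ Real.negMulLog (∑ u, ∑ r, p u r x)
        - (∑ u, ∑ r, p u r x) * Real.log (sU.card) := by
      intro x
      rcases eq_or_lt_of_le (hnnX x) with h | h
      · rw [← h]; simp
      · have hle1 : (∑ u, ∑ r, p u r x) * (sU.card : ℝ) ≤ 1 := by
          rw [mul_comm]; exact hkey x
        have hlog : Real.log ((∑ u, ∑ r, p u r x) * (sU.card : ℝ)) ≤ 0 :=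
          Real.log_nonpos (mul_nonneg (hnnX x) (Nat.cast_nonneg _)) hle1
        rw [Real.log_mul (ne_of_gt h) hNne] at hlog
        have hexp : Real.negMulLog (∑ u, ∑ r, p u r x)
            - (∑ u, ∑ r, p u r x) * Real.log (sU.card)
            = -((∑ u, ∑ r, p u r x) *
                (Real.log (∑ u, ∑ r, p u r x) + Real.log (sU.card))) := by
          rw [Real.negMulLog]; ring
        rw [hexp]
        have := mul_nonpos_of_nonneg_of_nonpos (le_of_lt h) hlog
        linarith
    have hFsum : ∑ x, (Real.negMulLog (∑ u, ∑ r, p u r x)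
        - (∑ u, ∑ r, p u r x) * Real.log (sU.card)) = 0 := by
      rw [Finset.sum_sub_distrib, ← Finset.sum_mul, hX1, one_mul]
      have hHX' : ∑ x, Real.negMulLog (∑ u, ∑ r, p u r x) = Real.log (sU.card) := by
        simpa [ent] using hHX
      rw [hHX', sub_self]
    intro x hx
    have hx0 : 0 < ∑ u, ∑ r, p u r x := (hnnX x).lt_of_ne (Ne.symm hx)
    have hzero := (Finset.sum_eq_zero_iff_of_nonneg (fun x _ => hFnn x)).mp hFsum x (mem_univ x)
    have hlogeq : Real.log ((∑ u, ∑ r, p u r x) * (sU.card : ℝ)) = 0 := by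
      rw [Real.log_mul (ne_of_gt hx0) hNne]
      have : Real.negMulLog (∑ u, ∑ r, p u r x)
          = (∑ u, ∑ r, p u r x) * Real.log (sU.card) := by linarith
      rw [Real.negMulLog] at this
      have h2 : (∑ u, ∑ r, p u r x) *
          (Real.log (∑ u, ∑ r, p u r x) + Real.log (sU.card)) = 0 := by linarith
      rcases mul_eq_zero.mp h2 with h3 | h3
      · exact absurd h3 (ne_of_gt hx0)
      · exact h3
    rcases Real.log_eq_zero.mp hlogeq with h3 | h3 | h3
    · exact absurd h3 (mul_pos hx0 (Nat.cast_pos.mpr hNpos)).ne'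
    · field_simp
      linarith [h3]
    · nlinarith [hx0, (Nat.cast_pos (α := ℝ)).mpr hNpos]
  -- master structure lemma : every nonzero p u r x equals pU u * pR r
  have hDet : ∀ u r x, p u r x ≠ 0 →
      p u r x = (∑ r', ∑ x', p u r' x') * (∑ u', ∑ x', p u' r x') := by
    intro u r x hne
    have hxne : (∑ u', ∑ r', p u' r' x) ≠ 0 := by
      intro h
      exact hne (le_antisymm (le_of_le_of_eq (hle_pX u r x) h) (hnn u r x))
    have hune : (∑ r', ∑ x', p u r' x') ≠ 0 := by
      intro h
      exact hne (le_antisymm (le_of_le_of_eq (hle_pU u r x) h) (hnn u r x))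
    have hu_mem : u ∈ sU := by rw [hsU]; exact Finset.mem_filter.mpr ⟨mem_univ u, hune⟩
    have hxval := hunif x hxne
    -- sum of pX x over sU equals 1
    have hconst : ∑ _u ∈ sU, (∑ u', ∑ r', p u' r' x) = 1 := by
      rw [Finset.sum_const, nsmul_eq_mul, hxval]
      field_simp
    -- equality of the sums, hence termwise equality S u = pX x over sU
    have hSeq : ∀ u' ∈ sU, (∑ u'', ∑ r', p u'' r' x)
        = ∑ r', (if u' = g r' x then (∑ u'', ∑ x', p u'' r' x') else 0) := by
      apply (Finset.sum_eq_sum_iff_of_le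
        (fun u' hu' => hS_le x u' (by rw [hsU] at hu'; exact (Finset.mem_filter.mp hu').2))).mp
      apply le_antisymm
      · apply Finset.sum_le_sum
        intro u' hu'
        exact hS_le x u' (by rw [hsU] at hu'; exact (Finset.mem_filter.mp hu').2)
      · rw [hconst]; exact hSsum x
    -- now for our u : row sums agree, so termwise equality over r
    have hrow : ∑ r', p u r' x
        = ∑ r', (if u = g r' x then
            (∑ r'', ∑ x', p u r'' x') * (∑ u', ∑ x', p u' r' x') else 0) := by
      rw [hIUX u x, hSeq u hu_mem, Finset.mul_sum]
      apply Finset.sum_congr rfl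
      intro r' _
      by_cases hc : u = g r' x
      · rw [if_pos hc, if_pos hc]
      · rw [if_neg hc, if_neg hc, mul_zero]
    have htermEq := (Finset.sum_eq_sum_iff_of_le (fun r'' _ => hterm u r'' x)).mp hrow r (mem_univ r)
    rw [if_pos (hg u r x hne)] at htermEq
    exact htermEq
  -- each row (u,r) has at most one nonzero x, hence entropy collapses
  have hrow2 : ∀ u r, ∑ x, Real.negMulLog (p u r x) = Real.negMulLog (∑ x, p u r x) := by
    intro u r
    by_cases hz : ∀ x, p u r x = 0
    · simp [hz]
    · push_neg at hz
      obtain ⟨x0, hx0⟩ := hz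
      have huniq : ∀ x, x ≠ x0 → p u r x = 0 := by
        intro x1 hx1
        by_contra h1
        have e0 := hDet u r x0 hx0
        have e1 := hDet u r x1 h1
        have hpair : p u r x0 + p u r x1 ≤ ∑ x, p u r x := by
          have hsub := Finset.sum_le_sum_of_subset_of_nonneg
            (Finset.subset_univ ({x0, x1} : Finset 𝒳)) (fun x _ _ => hnn u r x)
          rwa [Finset.sum_pair (Ne.symm hx1)] at hsub
        rw [hIUR u r] at hpair
        have hc0 : 0 < (∑ r', ∑ x, p u r' x) * (∑ u', ∑ x, p u' r x) := by
          rcases eq_or_lt_of_le (hnn u r x0) with h | h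
          · exact absurd h.symm hx0
          · rw [← e0]; exact h
        linarith [e0, e1]
      rw [Finset.sum_eq_single x0 (fun x _ hx => by rw [huniq x hx, Real.negMulLog_zero])
        (fun h => absurd (mem_univ x0) h),
        Finset.sum_eq_single x0 (fun x _ hx => huniq x hx) (fun h => absurd (mem_univ x0) h)]
  -- H(U,R,X) = H(U,R)
  have hG1 : ent (fun t : 𝒰 × ℛ × 𝒳 => p t.1 t.2.1 t.2.2)
      = ent (fun t : 𝒰 × ℛ => ∑ x, p t.1 t.2 x) := by
    simp only [ent, Fintype.sum_prod_type]
    exact Finset.sum_congr rfl fun u _ => Finset.sum_congr rfl fun r _ => hrow2 u r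
  -- product decompositions
  have hUX : ent (fun t : 𝒰 × 𝒳 => ∑ r, p t.1 r t.2)
      = ent (fun u => ∑ r, ∑ x, p u r x) + ent (fun x => ∑ u, ∑ r, p u r x) := by
    have heq : (fun t : 𝒰 × 𝒳 => ∑ r, p t.1 r t.2)
        = fun t : 𝒰 × 𝒳 => (∑ r, ∑ x', p t.1 r x') * (∑ u', ∑ r, p u' r t.2) :=
      funext fun t => hIUX t.1 t.2
    rw [heq]
    exact ent_prod _ _ hsum hX1
  have hUR : ent (fun t : 𝒰 × ℛ => ∑ x, p t.1 t.2 x)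
      = ent (fun u => ∑ r, ∑ x, p u r x) + ent (fun r => ∑ u, ∑ x, p u r x) := by
    have heq : (fun t : 𝒰 × ℛ => ∑ x, p t.1 t.2 x)
        = fun t : 𝒰 × ℛ => (∑ r', ∑ x, p t.1 r' x) * (∑ u', ∑ x, p u' t.2 x) :=
      funext fun t => hIUR t.1 t.2
    rw [heq]
    exact ent_prod _ _ hsum hR1
  refine ⟨by rw [hG1, sub_self], ?_⟩
  rw [hG1, hUR, hUX, ← hHX]
  ring
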